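/- Let n ∈ ℕ, ε > 0 and let g, h ∈ Homeo_+[0,1]. Suppose F, H ∈ Homeo(K) satisfy π_m ∘ F = ⊕^{p_{n+1}⋯p_m}(g) ∘ π_m and π_m ∘ H = ⊕^{p_{n+1}⋯p_m}(h) ∘ π_m for every m ≥ n (where for m = n the empty product is 1 and ⊕^1(g) = g). If d_sup(g, h) < ε/(p_1⋯p_n), then d(F, H) = sup_{x∈K} d_K(F(x), H(x)) < ε. -/

import Mathlib

open unitInterval

noncomputable section

/-- The group of orientation-preserving homeomorphisms of `[0,1]`:
increasing homeomorphisms of the unit interval. -/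
def OPH : Type := {f : I ≃ₜ I // Monotone f}

/-- `Homeo₊[0,1]` with the supremum metric `d_sup(f,g) = sup_x |f x - g x|`,
obtained by inducing the metric from `C(I,I)` (whose distance is the sup-distance). -/
noncomputable instance : MetricSpace OPH :=
  MetricSpace.induced (fun f => (⟨(f.1 : I → I), f.1.continuous⟩ : C(I, I)))
    (fun f g h => Subtype.ext (Homeomorph.ext fun x => by
      simpa using ContinuousMap.congr_fun h x))
    inferInstance

/-- The identity of `Homeo₊[0,1]`. -/
def OPH.id : OPH := ⟨Homeomorph.refl I, fun _ _ h => h⟩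

/-- `f ↦ f̃` where `f̃ (x) = 1 - f (1 - x)`. -/
def OPH.tilde (f : OPH) : OPH :=
  ⟨symmHomeomorph.trans (f.1.trans symmHomeomorph), by
    intro x y hxy
    have h1 : σ y ≤ σ x := symm_le_symm.mpr hxy
    have h2 : f.1 (σ y) ≤ f.1 (σ x) := f.2 h1
    exact symm_le_symm.mpr h2⟩



/-- The standard degree-`d` tent map, as a function on `ℝ`.  For
`x ∈ [m/d, (m+1)/d]` it equals `d*x - m` if `m` is even and `1 + m - d*x` if `m` is odd. -/
noncomputable def tentFun (d : ℕ) (x : ℝ) : ℝ :=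
  if Even ⌊(d : ℝ) * x⌋ then (d : ℝ) * x - ⌊(d : ℝ) * x⌋ else 1 + ⌊(d : ℝ) * x⌋ - (d : ℝ) * x

/-- The standard degree-`d` tent map `T_d : [0,1] → [0,1]`. -/
noncomputable def tentI (d : ℕ) (x : I) : I :=
  ⟨tentFun d x, by
    have h0 : ((⌊(d : ℝ) * x⌋ : ℤ) : ℝ) ≤ (d : ℝ) * x := Int.floor_le _
    have h1 : ((d : ℝ) * x : ℝ) < ⌊(d : ℝ) * x⌋ + 1 := Int.lt_floor_add_one _
    unfold tentFun
    rw [Set.mem_Icc]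
    split_ifs <;> constructor <;> linarith⟩

/-- The defining property of the homeomorphism `⊕^d(g)` of `[0,1]`:
`G = ⊕^d(g)` iff for every `i < d` and `x ∈ [i/d, (i+1)/d]`,
`G x = (1/d) * g_i (d*x - i) + i/d`, where `g_i = g` for even `i` and `g_i = g̃`
(with `g̃ (x) = 1 - g (1-x)`) for odd `i`. -/
def OplusProp (g : OPH) (d : ℕ) (G : I → I) : Prop :=
  ∀ i : ℕ, i < d → ∀ x : I, (i : ℝ) / d ≤ (x : ℝ) → (x : ℝ) ≤ ((i : ℝ) + 1) / d →
    ∀ hx : (d : ℝ) * (x : ℝ) - (i : ℝ) ∈ unitInterval,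
      (G x : ℝ) =
        (1 / d) * ((if Even i then g.1 else (OPH.tilde g).1) ⟨(d : ℝ) * (x : ℝ) - (i : ℝ), hx⟩ : ℝ)
          + (i : ℝ) / d
/-- The universal Knaster continuum determined by the prime sequence `p`:
`K = {x ∈ [0,1]^ℕ : x_{n-1} = T_{p_n}(x_n) for all n ≥ 1}`, as a subspace of `[0,1]^ℕ`. -/
abbrev Kc (p : ℕ → ℕ) : Type := {x : ℕ → I // ∀ n : ℕ, x n = tentI (p (n + 1)) (x (n + 1))}

/-- The metric `d_K(x,y) = |x₀-y₀|/2 + ∑_{i≥1} |x_i-y_i|/(p₁⋯p_i)` on `K`. -/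
noncomputable def dK (p : ℕ → ℕ) (x y : Kc p) : ℝ :=
  |(x.1 0 : ℝ) - (y.1 0 : ℝ)| / 2 +
    ∑' i : ℕ, |(x.1 (i + 1) : ℝ) - (y.1 (i + 1) : ℝ)| / ∏ j ∈ Finset.Icc 1 (i + 1), (p j : ℝ)

/-- The uniform-convergence distance `d(f,g) = sup_{x ∈ K} d_K(f x, g x)` on `Homeo(K)`. -/
noncomputable def HDist (p : ℕ → ℕ) (f g : Kc p ≃ₜ Kc p) : ℝ :=
  ⨆ x : Kc p, dK p (f x) (g x)

/-- The topology of uniform convergence on `Homeo(K)`: the topology generated by the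
open balls of the metric `d(f,g) = sup_{x ∈ K} d_K(f x, g x)`. -/
noncomputable instance KHomeoTop (p : ℕ → ℕ) : TopologicalSpace (Kc p ≃ₜ Kc p) :=
  TopologicalSpace.generateFrom
    {B | ∃ (f : Kc p ≃ₜ Kc p) (ε : ℝ), 0 < ε ∧ B = {g | HDist p f g < ε}}

/-! ### Auxiliary lemmas -/

noncomputable def tentCore (t : ℝ) : ℝ :=
  if Even ⌊t⌋ then t - ⌊t⌋ else 1 + ⌊t⌋ - t

lemma tentCore_eq (t : ℝ) : tentCore t = |t - 2 * round (t / 2)| := by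
  have hle : ((⌊t⌋ : ℝ)) ≤ t := Int.floor_le t
  have hlt : t < ⌊t⌋ + 1 := Int.lt_floor_add_one t
  rcases Int.even_or_odd ⌊t⌋ with ⟨k, hk⟩ | ⟨k, hk⟩
  · have hr : round (t / 2) = k := by
      rw [round_eq, Int.floor_eq_iff]
      constructor
      · rw [hk] at hle; push_cast at hle; linarith
      · rw [hk] at hlt; push_cast at hlt; linarith
    rw [tentCore, if_pos ⟨k, hk⟩, hr, hk]
    rw [abs_of_nonneg] <;> push_cast <;> [skip; (rw [hk] at hle; push_cast at hle)] <;> linarith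
  · have hr : round (t / 2) = k + 1 := by
      rw [round_eq, Int.floor_eq_iff]
      constructor
      · rw [hk] at hle; push_cast at hle ⊢; linarith
      · rw [hk] at hlt; push_cast at hlt ⊢; linarith
    have hodd : ¬ Even ⌊t⌋ := by rw [hk, Int.even_iff]; omega
    rw [tentCore, if_neg hodd, hr, hk]
    rw [abs_of_nonpos] <;> push_cast <;> rw [hk] at hlt <;> push_cast at hlt <;> linarith

lemma round_min (t : ℝ) (m : ℤ) : |t - round t| ≤ |t - m| := by
  rcases eq_or_ne m (round t) with rfl | hm
  · exact le_refl _
  · have h1 : (1 : ℝ) ≤ |((round t - m : ℤ) : ℝ)| := by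
      exact_mod_cast Int.one_le_abs (sub_ne_zero.mpr (Ne.symm hm))
    have h2 : |t - round t| ≤ 1/2 := abs_sub_round t
    push_cast at h1
    have := abs_sub_abs_le_abs_sub ((round t : ℝ) - m) (t - m)
    have h3 : |((round t : ℝ) - m) - (t - m)| = |t - round t| := by
      rw [show ((round t : ℝ) - m) - (t - m) = -(t - round t) by ring, abs_neg]
    rw [h3] at this
    linarith [abs_nonneg ((t : ℝ) - m)]

lemma tentCore_lip (a b : ℝ) : |tentCore a - tentCore b| ≤ |a - b| := by
  have key : ∀ s : ℝ, ∀ m : ℤ, |s - 2 * round (s / 2)| ≤ |s - 2 * m| := by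
    intro s m
    have := round_min (s / 2) m
    have h1 : |s - 2 * round (s/2)| = 2 * |s/2 - round (s/2)| := by
      rw [show s - 2 * (round (s/2) : ℝ) = 2 * (s/2 - round (s/2)) by ring, abs_mul,
        abs_of_nonneg (by norm_num : (0:ℝ) ≤ 2)]
    have h2 : |s - 2 * m| = 2 * |s/2 - m| := by
      rw [show s - 2 * (m : ℝ) = 2 * (s/2 - m) by ring, abs_mul,
        abs_of_nonneg (by norm_num : (0:ℝ) ≤ 2)]
    rw [h1, h2]; linarith
  rw [tentCore_eq, tentCore_eq, abs_sub_le_iff]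
  constructor
  · have := key a (round (b / 2))
    have h := abs_sub_abs_le_abs_sub (a - 2 * round (b/2)) (b - 2 * round (b/2))
    have h2 : |(a - 2 * (round (b/2):ℝ)) - (b - 2 * round (b/2))| = |a - b| := by ring_nf
    linarith [h2 ▸ h]
  · have := key b (round (a / 2))
    have h := abs_sub_abs_le_abs_sub (b - 2 * round (a/2)) (a - 2 * round (a/2))
    have h2 : |(b - 2 * (round (a/2):ℝ)) - (a - 2 * round (a/2))| = |b - a| := by ring_nf
    rw [abs_sub_comm a b]
    linarith [h2 ▸ h]

lemma tentI_lip (d : ℕ) (a b : I) :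
    |(tentI d a : ℝ) - (tentI d b : ℝ)| ≤ (d : ℝ) * |(a : ℝ) - (b : ℝ)| := by
  have h : |tentCore ((d:ℝ) * a) - tentCore ((d:ℝ) * b)| ≤ |(d:ℝ) * a - (d:ℝ) * b| :=
    tentCore_lip _ _
  have he : ∀ x : I, (tentI d x : ℝ) = tentCore ((d:ℝ) * x) := fun x => rfl
  rw [he, he]
  calc |tentCore ((d:ℝ) * a) - tentCore ((d:ℝ) * b)| ≤ |(d:ℝ) * a - (d:ℝ) * b| := h
    _ = (d:ℝ) * |(a:ℝ) - (b:ℝ)| := by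
        rw [show (d:ℝ) * a - (d:ℝ) * b = (d:ℝ) * ((a:ℝ) - b) by ring, abs_mul,
          Nat.abs_cast]

lemma OPH.dist_apply (g h : OPH) (t : I) : |(g.1 t : ℝ) - (h.1 t : ℝ)| ≤ dist g h := by
  have := ContinuousMap.dist_apply_le_dist (f := (⟨(g.1 : I → I), g.1.continuous⟩ : C(I, I)))
    (g := (⟨(h.1 : I → I), h.1.continuous⟩ : C(I, I))) t
  rw [Subtype.dist_eq, Real.dist_eq] at this
  exact this

lemma OPH.tilde_apply (g : OPH) (t : I) : ((OPH.tilde g).1 t : ℝ) = 1 - (g.1 (σ t) : ℝ) := by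
  show ((σ (g.1 (σ t)) : I) : ℝ) = _
  rw [coe_symm_eq]

lemma OPH.tilde_dist_apply (g h : OPH) (t : I) :
    |((OPH.tilde g).1 t : ℝ) - ((OPH.tilde h).1 t : ℝ)| ≤ dist g h := by
  rw [OPH.tilde_apply, OPH.tilde_apply,
    show (1 - (g.1 (σ t) : ℝ)) - (1 - (h.1 (σ t) : ℝ)) = -((g.1 (σ t) : ℝ) - h.1 (σ t)) by ring,
    abs_neg]
  exact OPH.dist_apply g h (σ t)

/-- Key estimate: if `G` and `H` satisfy `OplusProp` for `g` resp. `h` with the same degree `d`,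
then `|G y - H y| ≤ dist g h / d` for all `y`. -/
lemma oplus_dist (g h : OPH) (d : ℕ) (hd : 1 ≤ d) (G H : I → I)
    (hG : OplusProp g d G) (hH : OplusProp h d H) (y : I) :
    |(G y : ℝ) - (H y : ℝ)| ≤ dist g h / d := by
  have hd0 : (0 : ℝ) < d := by exact_mod_cast hd
  set t : ℝ := (d : ℝ) * y with ht
  have hy0 : 0 ≤ t := mul_nonneg hd0.le y.2.1
  have hy1 : t ≤ d := by
    calc t ≤ (d:ℝ) * 1 := mul_le_mul_of_nonneg_left y.2.2 hd0.le
      _ = d := mul_one _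
  have hflnn : 0 ≤ ⌊t⌋ := Int.floor_nonneg.mpr hy0
  set i : ℕ := min (⌊t⌋.toNat) (d - 1) with hi_def
  have hi : i < d := lt_of_le_of_lt (min_le_right _ _) (by omega)
  have hcast : ((⌊t⌋.toNat : ℕ) : ℝ) = ((⌊t⌋ : ℤ) : ℝ) := by
    exact_mod_cast congrArg (fun z : ℤ => (z : ℝ)) (Int.toNat_of_nonneg hflnn)
  have h1 : (i : ℝ) ≤ t := by
    have : (i : ℝ) ≤ ((⌊t⌋.toNat : ℕ) : ℝ) := by exact_mod_cast min_le_left _ _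
    rw [hcast] at this
    exact this.trans (Int.floor_le t)
  have h2 : t ≤ (i : ℝ) + 1 := by
    rcases le_or_gt (⌊t⌋.toNat) (d - 1) with hc | hc
    · have hie : i = ⌊t⌋.toNat := min_eq_left hc
      have := Int.lt_floor_add_one t
      rw [hie]; rw [hcast]; linarith
    · have hie : i = d - 1 := min_eq_right hc.le
      have : ((i : ℝ)) + 1 = d := by
        rw [hie]; rw [Nat.cast_sub hd]; ring
      rw [this]; exact hy1
  have hlow : (i : ℝ) / d ≤ (y : ℝ) := by
    rw [div_le_iff₀ hd0]; rw [mul_comm]; exact h1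
  have hhigh : (y : ℝ) ≤ ((i : ℝ) + 1) / d := by
    rw [le_div_iff₀ hd0]; rw [mul_comm]; exact h2
  have hx : (d : ℝ) * (y : ℝ) - (i : ℝ) ∈ unitInterval := ⟨by linarith, by linarith⟩
  have eqG := hG i hi y hlow hhigh hx
  have eqH := hH i hi y hlow hhigh hx
  set t' : I := ⟨(d : ℝ) * (y : ℝ) - (i : ℝ), hx⟩
  have hAB : |((if Even i then g.1 else (OPH.tilde g).1) t' : ℝ)
      - ((if Even i then h.1 else (OPH.tilde h).1) t' : ℝ)| ≤ dist g h := by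
    by_cases hpar : Even i
    · rw [if_pos hpar, if_pos hpar]; exact OPH.dist_apply g h t'
    · rw [if_neg hpar, if_neg hpar]; exact OPH.tilde_dist_apply g h t'
  set A : ℝ := ((if Even i then g.1 else (OPH.tilde g).1) t' : ℝ)
  set B : ℝ := ((if Even i then h.1 else (OPH.tilde h).1) t' : ℝ)
  have : (G y : ℝ) - (H y : ℝ) = (A - B) / d := by
    rw [eqG, eqH]; ring
  rw [this, abs_div, abs_of_pos hd0]
  gcongr

/-- One step of the tent-map compatibility: adjacent coordinates. -/
lemma kc_step (p : ℕ → ℕ) (x y : Kc p) (j : ℕ) :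
    |(x.1 j : ℝ) - (y.1 j : ℝ)| ≤ (p (j+1) : ℝ) * |(x.1 (j+1) : ℝ) - (y.1 (j+1) : ℝ)| := by
  rw [x.2 j, y.2 j]
  exact tentI_lip _ _ _

lemma kc_chain (p : ℕ → ℕ) (x y : Kc p) (j : ℕ) : ∀ k, j ≤ k →
    |(x.1 j : ℝ) - (y.1 j : ℝ)| ≤
      (∏ i ∈ Finset.Icc (j+1) k, (p i : ℝ)) * |(x.1 k : ℝ) - (y.1 k : ℝ)| := by
  refine Nat.le_induction ?_ ?_
  · rw [Finset.Icc_eq_empty (by omega), Finset.prod_empty, one_mul]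
  · intro k hk ih
    have hprod : ∏ i ∈ Finset.Icc (j+1) (k+1), (p i : ℝ)
        = (∏ i ∈ Finset.Icc (j+1) k, (p i : ℝ)) * (p (k+1) : ℝ) :=
      Finset.prod_Icc_succ_top (by omega) _
    have hnn : (0:ℝ) ≤ ∏ i ∈ Finset.Icc (j+1) k, (p i : ℝ) :=
      Finset.prod_nonneg fun i _ => Nat.cast_nonneg _
    calc |(x.1 j : ℝ) - (y.1 j : ℝ)|
        ≤ (∏ i ∈ Finset.Icc (j+1) k, (p i : ℝ)) * |(x.1 k : ℝ) - (y.1 k : ℝ)| := ih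
      _ ≤ (∏ i ∈ Finset.Icc (j+1) k, (p i : ℝ)) *
            ((p (k+1) : ℝ) * |(x.1 (k+1) : ℝ) - (y.1 (k+1) : ℝ)|) :=
          mul_le_mul_of_nonneg_left (kc_step p x y k) hnn
      _ = _ := by rw [hprod]; ring


/-- Let `n ∈ ℕ`, `ε > 0`, `g, h ∈ Homeo₊[0,1]`, and let `F, H ∈ Homeo(K)` satisfy, for
every `m ≥ n`, `π_m ∘ F = ⊕^{p_{n+1}⋯p_m}(g) ∘ π_m` and `π_m ∘ H = ⊕^{p_{n+1}⋯p_m}(h) ∘ π_m`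
(the maps `⊕^{d}(g)` being characterized by `OplusProp g d ·`; for `m = n` the empty product
is `1` and `⊕^1(g) = g`).  If `d_sup(g,h) < ε/(p₁⋯p_n)`, then
`d(F,H) = sup_{x ∈ K} d_K(F x, H x) < ε`. -/
theorem induced_maps_close_of_close
    (p : ℕ → ℕ) (hp : ∀ i : ℕ, 1 ≤ i → (p i).Prime)
    (hp' : ∀ q : ℕ, q.Prime → {i : ℕ | 1 ≤ i ∧ p i = q}.Infinite)
    (n : ℕ) (ε : ℝ) (hε : 0 < ε) (g h : OPH) (F H : Kc p ≃ₜ Kc p)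
    (hF : ∀ m : ℕ, n ≤ m → ∃ Gm : I → I,
      OplusProp g (∏ i ∈ Finset.Icc (n + 1) m, p i) Gm ∧
      ∀ x : Kc p, (F x).1 m = Gm (x.1 m))
    (hH : ∀ m : ℕ, n ≤ m → ∃ Hm : I → I,
      OplusProp h (∏ i ∈ Finset.Icc (n + 1) m, p i) Hm ∧
      ∀ x : Kc p, (H x).1 m = Hm (x.1 m))
    (hgh : dist g h < ε / ∏ i ∈ Finset.Icc 1 n, (p i : ℝ)) :
    HDist p F H < ε := by
  classical
  set δ := dist g h with hδdef
  have hδ0 : 0 ≤ δ := dist_nonneg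
  set P : ℕ → ℝ := fun m => ∏ i ∈ Finset.Icc 1 m, (p i : ℝ) with hPdef
  have hPapp : ∀ m : ℕ, ∏ i ∈ Finset.Icc 1 m, (p i : ℝ) = P m := fun m => rfl
  have hptwo : ∀ j : ℕ, 1 ≤ j → (2:ℝ) ≤ (p j : ℝ) := fun j hj => by
    exact_mod_cast (hp j hj).two_le
  have hPpos : ∀ m, 0 < P m := fun m => Finset.prod_pos (fun i hi => by
    have := hptwo i (Finset.mem_Icc.mp hi).1; linarith)
  have hPge : ∀ m, (2:ℝ)^m ≤ P m := by
    intro m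
    have h2 : (2:ℝ)^m = ∏ i ∈ Finset.Icc 1 m, (2:ℝ) := by
      rw [Finset.prod_const, Nat.card_Icc]; norm_num
    rw [← hPapp, h2]
    exact Finset.prod_le_prod (fun i _ => by norm_num)
      (fun i hi => hptwo i (Finset.mem_Icc.mp hi).1)
  have hIoc : ∀ m : ℕ, Finset.Icc 1 m = Finset.Ioc 0 m := by
    intro m; ext i; simp [Finset.mem_Icc, Finset.mem_Ioc]; omega
  have hsplit : ∀ a b : ℕ, a ≤ b →
      P b = P a * ∏ i ∈ Finset.Icc (a+1) b, (p i : ℝ) := by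
    intro a b hab
    rw [← hPapp, ← hPapp, hIoc, hIoc, Finset.Icc_add_one_left_eq_Ioc]
    exact (Finset.prod_Ioc_consecutive _ (Nat.zero_le a) hab).symm
  -- the key coordinate estimate for m ≥ n
  have keyge : ∀ (x : Kc p) (m : ℕ), n ≤ m →
      |((F x).1 m : ℝ) - ((H x).1 m : ℝ)| ≤ δ / ∏ i ∈ Finset.Icc (n+1) m, (p i : ℝ) := by
    intro x m hm
    obtain ⟨Gm, hGm, hGx⟩ := hF m hm
    obtain ⟨Hm, hHm, hHx⟩ := hH m hm
    have hd : 1 ≤ ∏ i ∈ Finset.Icc (n+1) m, p i :=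
      Finset.one_le_prod' fun i hi => (hp i (by
        have := (Finset.mem_Icc.mp hi).1; omega)).pos
    have hb := oplus_dist g h _ hd Gm Hm hGm hHm (x.1 m)
    rw [hGx x, hHx x]
    rwa [Nat.cast_prod] at hb
  -- the key coordinate estimate for all m
  have key : ∀ (x : Kc p) (m : ℕ),
      |((F x).1 m : ℝ) - ((H x).1 m : ℝ)| ≤ δ * P n / P m := by
    intro x m
    rcases le_or_gt n m with hm | hm
    · have h1 := keyge x m hm
      have hDpos : 0 < ∏ i ∈ Finset.Icc (n+1) m, (p i : ℝ) :=
        Finset.prod_pos fun i hi => by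
          have := hptwo i (by have := (Finset.mem_Icc.mp hi).1; omega); linarith
      have heq : δ * P n / P m = δ / ∏ i ∈ Finset.Icc (n+1) m, (p i : ℝ) := by
        rw [hsplit n m hm, mul_comm (P n) (∏ i ∈ Finset.Icc (n+1) m, (p i : ℝ)),
          mul_div_mul_right _ _ (hPpos n).ne']
      rw [heq]; exact h1
    · have h1 := kc_chain p (F x) (H x) m n hm.le
      have h2 := keyge x n le_rfl
      rw [Finset.Icc_eq_empty (by omega), Finset.prod_empty, div_one] at h2
      have hDnn : (0:ℝ) ≤ ∏ i ∈ Finset.Icc (m+1) n, (p i : ℝ) :=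
        Finset.prod_nonneg fun i _ => Nat.cast_nonneg _
      have hD : (∏ i ∈ Finset.Icc (m+1) n, (p i : ℝ)) = P n / P m := by
        rw [hsplit m n hm.le, mul_div_cancel_left₀ _ (hPpos m).ne']
      calc |((F x).1 m : ℝ) - ((H x).1 m : ℝ)|
          ≤ (∏ i ∈ Finset.Icc (m+1) n, (p i : ℝ)) * |((F x).1 n : ℝ) - ((H x).1 n : ℝ)| := h1
        _ ≤ (∏ i ∈ Finset.Icc (m+1) n, (p i : ℝ)) * δ := mul_le_mul_of_nonneg_left h2 hDnn
        _ = δ * P n / P m := by rw [hD]; ring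
  set C := δ * P n with hCdef
  have hC0 : 0 ≤ C := mul_nonneg hδ0 (hPpos n).le
  -- pointwise bound on dK
  have hbx : ∀ x : Kc p, dK p (F x) (H x) ≤ C := by
    intro x
    unfold dK
    have hgeo : Summable (fun i : ℕ => C * (1/4) * (1/4:ℝ)^i) :=
      (summable_geometric_of_lt_one (by norm_num) (by norm_num)).mul_left _
    have hterm : ∀ i : ℕ,
        |((F x).1 (i+1) : ℝ) - ((H x).1 (i+1) : ℝ)| / ∏ j ∈ Finset.Icc 1 (i+1), (p j : ℝ)
          ≤ C * (1/4) * (1/4:ℝ)^i := by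
      intro i
      have h1 := key x (i+1)
      have hP1 : 0 < P (i+1) := hPpos (i+1)
      have h4 : (4:ℝ)^(i+1) ≤ P (i+1)^2 := by
        have h2 := hPge (i+1)
        calc (4:ℝ)^(i+1) = ((2:ℝ)^(i+1))^2 := by
              rw [show (4:ℝ) = 2*2 by norm_num, mul_pow, sq]
          _ ≤ P (i+1)^2 := by gcongr <;> positivity
      have heq : C * (1/4) * (1/4:ℝ)^i = C / (4:ℝ)^(i+1) := by
        rw [pow_succ, one_div, inv_pow, div_eq_mul_inv, mul_inv]
        ring
      calc |((F x).1 (i+1) : ℝ) - ((H x).1 (i+1) : ℝ)| / ∏ j ∈ Finset.Icc 1 (i+1), (p j : ℝ)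
          = |((F x).1 (i+1) : ℝ) - ((H x).1 (i+1) : ℝ)| / P (i+1) := by rw [hPapp]
        _ ≤ (C / P (i+1)) / P (i+1) := by gcongr
        _ = C / (P (i+1))^2 := by rw [div_div, sq]
        _ ≤ C / (4:ℝ)^(i+1) := by
            apply div_le_div_of_nonneg_left hC0 (by positivity) h4
        _ = C * (1/4) * (1/4:ℝ)^i := heq.symm
    have hf : Summable (fun i : ℕ =>
        |((F x).1 (i+1) : ℝ) - ((H x).1 (i+1) : ℝ)| / ∏ j ∈ Finset.Icc 1 (i+1), (p j : ℝ)) :=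
      Summable.of_nonneg_of_le
        (fun i => div_nonneg (abs_nonneg _) (by rw [hPapp]; exact (hPpos _).le))
        hterm hgeo
    have htsum : ∑' i : ℕ, C * (1/4) * (1/4:ℝ)^i = C / 3 := by
      rw [tsum_mul_left, tsum_geometric_of_lt_one (by norm_num) (by norm_num)]
      norm_num
      ring
    have hsum_le : ∑' i : ℕ,
        |((F x).1 (i+1) : ℝ) - ((H x).1 (i+1) : ℝ)| / ∏ j ∈ Finset.Icc 1 (i+1), (p j : ℝ)
          ≤ C / 3 := htsum ▸ Summable.tsum_le_tsum hterm hf hgeo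
    have h0b : |((F x).1 0 : ℝ) - ((H x).1 0 : ℝ)| / 2 ≤ C / 2 := by
      have h1 := key x 0
      have hP0 : P 0 = 1 := by
        rw [← hPapp, Finset.Icc_eq_empty (by omega), Finset.prod_empty]
      rw [hP0, div_one] at h1
      linarith
    linarith
  have hsup : HDist p F H ≤ C := Real.iSup_le hbx hC0
  have hlt : C < ε := by
    rw [hCdef]
    rw [hPapp] at hgh
    exact (lt_div_iff₀ (hPpos n)).mp hgh
  exact lt_of_le_of_lt hsup hlt


end
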